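/- A permutation π of [n] avoids the pattern 3-2-1 if and only if both its subsequence of weak excedance values and its subsequence of non-weak-excedance values are increasing; equivalently, iff π is a union of at most two increasing subsequences partitioned by weak excedances. -/
import Mathlib


def Avoids321 {n : ℕ} (π : Equiv.Perm (Fin n)) : Prop :=
  ¬ ∃ i j k : Fin n, i < j ∧ j < k ∧ π k < π j ∧ π j < π i

private lemma card_filter_lt_aux {n : ℕ} (π : Equiv.Perm (Fin n)) (c : Fin n) :
    (Finset.univ.filter fun k => π k < c).card = c.val := by
  have h : (Finset.univ.filter fun k => π k < c) = (Finset.Iio c).image π.symm := by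
    ext k
    simp only [Finset.mem_filter, Finset.mem_univ, true_and, Finset.mem_image,
      Finset.mem_Iio]
    constructor
    · intro hk; exact ⟨π k, hk, π.symm_apply_apply k⟩
    · rintro ⟨m, hm, rfl⟩; simpa using hm
  rw [h, Finset.card_image_of_injective _ π.symm.injective, Fin.card_Iio]

private lemma card_filter_gt_aux {n : ℕ} (π : Equiv.Perm (Fin n)) (c : Fin n) :
    (Finset.univ.filter fun k => c < π k).card = n - 1 - c.val := by
  have h : (Finset.univ.filter fun k => c < π k) = (Finset.Ioi c).image π.symm := by
    ext k
    simp only [Finset.mem_filter, Finset.mem_univ, true_and, Finset.mem_image,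
      Finset.mem_Ioi]
    constructor
    · intro hk; exact ⟨π k, hk, π.symm_apply_apply k⟩
    · rintro ⟨m, hm, rfl⟩; simpa using hm
  rw [h, Finset.card_image_of_injective _ π.symm.injective, Fin.card_Ioi]

theorem avoids321_iff_wex_nonwex_increasing (n : ℕ) (π : Equiv.Perm (Fin n)) :
    Avoids321 π ↔
      ((∀ i j : Fin n, i < j → i ≤ π i → j ≤ π j → π i < π j) ∧
       (∀ i j : Fin n, i < j → π i < i → π j < j → π i < π j)) := by
  constructor
  · intro hav
    constructor
    · intro i j hij hi hj
      by_contra hle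
      push_neg at hle
      have hne : π j < π i := by
        rcases lt_or_eq_of_le hle with h | h
        · exact h
        · exact absurd (π.injective h) (ne_of_gt hij)
      -- find k > j with π k < π j
      have hk : ∃ k, j < k ∧ π k < π j := by
        by_contra hcon
        push_neg at hcon
        set A := Finset.univ.filter fun k => π k < π j with hA
        have hcard : A.card = (π j).val := card_filter_lt_aux π (π j)
        have hsub : A ⊆ (Finset.Iio j).erase i := by
          intro k hk
          simp only [hA, Finset.mem_filter, Finset.mem_univ, true_and] at hk
          have hkj : k < j := by
            rcases lt_trichotomy k j with h | h | h
            · exact h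
            · exact absurd (h ▸ hk) (lt_irrefl _)
            · exact absurd hk (not_lt.mpr (hcon k h))
          have hki : k ≠ i := by
            rintro rfl
            exact absurd (lt_trans hk hne) (lt_irrefl _)
          exact Finset.mem_erase.mpr ⟨hki, Finset.mem_Iio.mpr hkj⟩
        have hle2 : A.card ≤ ((Finset.Iio j).erase i).card := Finset.card_le_card hsub
        rw [Finset.card_erase_of_mem (Finset.mem_Iio.mpr hij), Fin.card_Iio] at hle2
        have h1 : (j : ℕ) ≤ (π j : ℕ) := hj
        have h2 : (0 : ℕ) < (j : ℕ) := lt_of_le_of_lt (Nat.zero_le _) hij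
        omega
      obtain ⟨k, hjk, hkj⟩ := hk
      exact hav ⟨i, j, k, hij, hjk, hkj, hne⟩
    · intro i j hij hi hj
      by_contra hle
      push_neg at hle
      have hne : π j < π i := by
        rcases lt_or_eq_of_le hle with h | h
        · exact h
        · exact absurd (π.injective h) (ne_of_gt hij)
      -- find h < i with π i < π h
      have hk : ∃ h, h < i ∧ π i < π h := by
        by_contra hcon
        push_neg at hcon
        set B := Finset.univ.filter fun k => π i < π k with hB
        have hcard : B.card = n - 1 - (π i).val := card_filter_gt_aux π (π i)
        have hsub : B ⊆ (Finset.Ioi i).erase j := by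
          intro k hk
          simp only [hB, Finset.mem_filter, Finset.mem_univ, true_and] at hk
          have hki : i < k := by
            rcases lt_trichotomy k i with h | h | h
            · exact absurd hk (not_lt.mpr (hcon k h))
            · exact absurd (h ▸ hk) (lt_irrefl _)
            · exact h
          have hkj : k ≠ j := by
            rintro rfl
            exact absurd (lt_trans hk hne) (lt_irrefl _)
          exact Finset.mem_erase.mpr ⟨hkj, Finset.mem_Ioi.mpr hki⟩
        have hle2 : B.card ≤ ((Finset.Ioi i).erase j).card := Finset.card_le_card hsub
        rw [Finset.card_erase_of_mem (Finset.mem_Ioi.mpr hij), Fin.card_Ioi] at hle2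
        have h1 : (π i : ℕ) < (i : ℕ) := hi
        have h2 : (i : ℕ) < (j : ℕ) := hij
        have h3 : (j : ℕ) < n := j.isLt
        omega
      obtain ⟨h, hhi, hih⟩ := hk
      exact hav ⟨h, i, j, hhi, hij, hne, hih⟩
  · rintro ⟨h1, h2⟩ ⟨i, j, k, hij, hjk, hkj, hji⟩
    rcases le_or_gt i (π i) with hi | hi
    · rcases le_or_gt j (π j) with hj | hj
      · exact absurd (h1 i j hij hi hj) (not_lt.mpr (le_of_lt hji))
      · rcases le_or_gt k (π k) with hk | hk
        · exact absurd (h1 i k (lt_trans hij hjk) hi hk)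
            (not_lt.mpr (le_of_lt (lt_trans hkj hji)))
        · exact absurd (h2 j k hjk hj hk) (not_lt.mpr (le_of_lt hkj))
    · rcases le_or_gt j (π j) with hj | hj
      · exact absurd (lt_trans (lt_trans hji hi) (lt_of_lt_of_le hij hj)) (lt_irrefl _)
      · exact absurd (h2 i j hij hi hj) (not_lt.mpr (le_of_lt hji))
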